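/- Let α ∈ (0, 1), r_1 < 0, r_2 < 0, σ_1 ≥ 0, σ_2 ≥ 0 and ρ ∈ [−1, 1]. Then ((σ_1² + 2ρσ_1σ_2 + σ_2²)/(2(r_1 + r_2)))·ln α ≤ (σ_1²/(2r_1))·ln α + (σ_2²/(2r_2))·ln α. -/

import Mathlib

open Real

/-- Sub-additivity of the infinite-horizon dynamic VaR for correlated
Brownian risk processes: for `α ∈ (0,1)`, `r₁, r₂ < 0`, `σ₁, σ₂ ≥ 0` and `ρ ∈ [−1,1]`,
`((σ₁² + 2ρσ₁σ₂ + σ₂²)/(2(r₁+r₂)))·ln α ≤ (σ₁²/(2r₁))·ln α + (σ₂²/(2r₂))·ln α`. -/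
theorem stmt_13 (α r₁ r₂ σ₁ σ₂ ρ : ℝ) (hα : α ∈ Set.Ioo (0 : ℝ) 1)
    (hr₁ : r₁ < 0) (hr₂ : r₂ < 0) (hσ₁ : 0 ≤ σ₁) (hσ₂ : 0 ≤ σ₂)
    (hρ : ρ ∈ Set.Icc (-1 : ℝ) 1) :
    (σ₁ ^ 2 + 2 * ρ * σ₁ * σ₂ + σ₂ ^ 2) / (2 * (r₁ + r₂)) * Real.log α
      ≤ σ₁ ^ 2 / (2 * r₁) * Real.log α + σ₂ ^ 2 / (2 * r₂) * Real.log α := by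
  have hlog : Real.log α ≤ 0 := le_of_lt (Real.log_neg hα.1 hα.2)
  have h12 : r₁ + r₂ < 0 := by linarith
  have key : σ₁ ^ 2 / (2 * r₁) + σ₂ ^ 2 / (2 * r₂)
      ≤ (σ₁ ^ 2 + 2 * ρ * σ₁ * σ₂ + σ₂ ^ 2) / (2 * (r₁ + r₂)) := by
    have hdiff : (σ₁ ^ 2 + 2 * ρ * σ₁ * σ₂ + σ₂ ^ 2) / (2 * (r₁ + r₂))
        - (σ₁ ^ 2 / (2 * r₁) + σ₂ ^ 2 / (2 * r₂))
        = (4 * (2 * ρ * σ₁ * σ₂ * r₁ * r₂ - (σ₁ * r₂) ^ 2 - (σ₂ * r₁) ^ 2))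
          / ((2 * (r₁ + r₂)) * ((2 * r₁) * (2 * r₂))) := by
      have h1 : (2:ℝ) * r₁ ≠ 0 := by nlinarith
      have h2 : (2:ℝ) * r₂ ≠ 0 := by nlinarith
      have h3 : (2:ℝ) * (r₁ + r₂) ≠ 0 := by nlinarith
      have h1' : r₁ ≠ 0 := hr₁.ne
      have h2' : r₂ ≠ 0 := hr₂.ne
      have h3' : r₁ + r₂ ≠ 0 := h12.ne
      field_simp
      ring
    have hnum : 4 * (2 * ρ * σ₁ * σ₂ * r₁ * r₂ - (σ₁ * r₂) ^ 2 - (σ₂ * r₁) ^ 2) ≤ 0 := by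
      nlinarith [sq_nonneg (σ₁ * r₂ - σ₂ * r₁), mul_pos_of_neg_of_neg hr₁ hr₂,
        mul_nonneg hσ₁ hσ₂, hρ.2, mul_nonneg (mul_nonneg hσ₁ hσ₂) (le_of_lt (mul_pos_of_neg_of_neg hr₁ hr₂))]
    have hden : (2 * (r₁ + r₂)) * ((2 * r₁) * (2 * r₂)) < 0 := by
      have : (0:ℝ) < (2 * r₁) * (2 * r₂) := by nlinarith
      nlinarith
    have : 0 ≤ (4 * (2 * ρ * σ₁ * σ₂ * r₁ * r₂ - (σ₁ * r₂) ^ 2 - (σ₂ * r₁) ^ 2))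
          / ((2 * (r₁ + r₂)) * ((2 * r₁) * (2 * r₂))) := by
      rw [← neg_div_neg_eq]
      exact div_nonneg (by linarith) (by linarith)
    linarith
  calc (σ₁ ^ 2 + 2 * ρ * σ₁ * σ₂ + σ₂ ^ 2) / (2 * (r₁ + r₂)) * Real.log α
      ≤ (σ₁ ^ 2 / (2 * r₁) + σ₂ ^ 2 / (2 * r₂)) * Real.log α :=
        mul_le_mul_of_nonpos_right key hlog
    _ = σ₁ ^ 2 / (2 * r₁) * Real.log α + σ₂ ^ 2 / (2 * r₂) * Real.log α := by ring
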